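/- Let T > 0, C > 0, a ≥ 0, and let f, g : [0,T] → [0,∞) be Lebesgue integrable functions such that f(t) ≤ a·g(t) + C·∫_0^t g(s) ds for every t ∈ [0,T]. Then ∫_0^T e^{−2Ct} f(t) dt ≤ ( a + 1/2 ) · ∫_0^T e^{−2Ct} g(t) dt. -/

import Mathlib

open MeasureTheory

/-- Abstract form of the weighted-norm contraction estimate (3.13)–(3.14): if
`f(t) ≤ a g(t) + C ∫_0^t g(s) ds` on `[0,T]`, then
`∫_0^T e^{−2Ct} f(t) dt ≤ (a + 1/2) ∫_0^T e^{−2Ct} g(t) dt`. -/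
theorem weighted_norm_contraction_estimate
    (T : ℝ) (hT : 0 < T) (C : ℝ) (hC : 0 < C) (a : ℝ) (ha : 0 ≤ a)
    (f g : ℝ → ℝ) (hf0 : ∀ t, 0 ≤ f t) (hg0 : ∀ t, 0 ≤ g t)
    (hfint : IntegrableOn f (Set.Icc 0 T)) (hgint : IntegrableOn g (Set.Icc 0 T))
    (hfg : ∀ t ∈ Set.Icc (0 : ℝ) T, f t ≤ a * g t + C * ∫ s in (0 : ℝ)..t, g s) :
    ∫ t in (0 : ℝ)..T, Real.exp (-2 * C * t) * f t ≤
      (a + 1 / 2) * ∫ t in (0 : ℝ)..T, Real.exp (-2 * C * t) * g t := by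
  have hTle : (0 : ℝ) ≤ T := hT.le
  set w : ℝ → ℝ := fun t => Real.exp (-2 * C * t) with hw
  set G : ℝ → ℝ := fun t => ∫ s in (0 : ℝ)..t, g s with hGdef
  have hwc : Continuous w := Real.continuous_exp.comp (continuous_const.mul continuous_id)
  have hwpos : ∀ t, 0 < w t := fun t => Real.exp_pos _
  -- basic integrability facts
  have hgIoc : IntegrableOn g (Set.Ioc 0 T) := hgint.mono_set Set.Ioc_subset_Icc_self
  have hwg : IntegrableOn (fun t => w t * g t) (Set.Icc 0 T) :=
    IntegrableOn.continuousOn_mul hwc.continuousOn hgint isCompact_Icc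
  have hwf : IntegrableOn (fun t => w t * f t) (Set.Icc 0 T) :=
    IntegrableOn.continuousOn_mul hwc.continuousOn hfint isCompact_Icc
  have hGc : ContinuousOn G (Set.Icc 0 T) := by
    have h1 : IntegrableOn g (Set.uIcc 0 T) := by rwa [Set.uIcc_of_le hTle]
    have := intervalIntegral.continuousOn_primitive_interval (a := 0) (b := T)
      (μ := volume) (f := g) h1
    rwa [Set.uIcc_of_le hTle] at this
  have hwG : IntegrableOn (fun t => w t * G t) (Set.Icc 0 T) :=
    (hwc.continuousOn.mul hGc).integrableOn_compact isCompact_Icc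
  -- the measure on [0, T]
  set μ : Measure ℝ := volume.restrict (Set.Ioc 0 T) with hμ
  have hwgμ : Integrable (fun t => w t * g t) μ := hwg.mono_set Set.Ioc_subset_Icc_self
  have hwfμ : Integrable (fun t => w t * f t) μ := hwf.mono_set Set.Ioc_subset_Icc_self
  have hwGμ : Integrable (fun t => w t * G t) μ := hwG.mono_set Set.Ioc_subset_Icc_self
  -- the kernel for Fubini
  set k : ℝ × ℝ → ℝ := fun p => Set.indicator (Set.Ioc 0 p.1) (fun s => w p.1 * g s) p.2
    with hk
  have hE : MeasurableSet {p : ℝ × ℝ | p.2 ∈ Set.Ioc 0 p.1} := by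
    have h1 : MeasurableSet {p : ℝ × ℝ | 0 < p.2} :=
      measurableSet_lt measurable_const measurable_snd
    have h2 : MeasurableSet {p : ℝ × ℝ | p.2 ≤ p.1} :=
      measurableSet_le measurable_snd measurable_fst
    exact h1.inter h2
  have hkind : k = Set.indicator {p : ℝ × ℝ | p.2 ∈ Set.Ioc 0 p.1}
      (fun p => w p.1 * g p.2) := by
    funext p
    by_cases hp : p.2 ∈ Set.Ioc 0 p.1
    · simp only [hk, Set.indicator_of_mem hp,
        Set.indicator_of_mem (show p ∈ {p : ℝ × ℝ | p.2 ∈ Set.Ioc 0 p.1} from hp)]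
    · simp only [hk, Set.indicator_of_notMem hp,
        Set.indicator_of_notMem (show p ∉ {p : ℝ × ℝ | p.2 ∈ Set.Ioc 0 p.1} from hp)]
  have hwμ : Integrable w μ := hwc.integrableOn_Ioc
  have hkint : Integrable k (μ.prod μ) := by
    rw [hkind]
    exact (Integrable.mul_prod hwμ hgIoc).indicator hE
  -- inner integral in s: for t ∈ (0, T], ∫ s, k (t, s) ∂μ = w t * G t
  have hinner : ∀ t ∈ Set.Ioc (0 : ℝ) T, (∫ s, k (t, s) ∂μ) = w t * G t := by
    intro t ht
    have hsub : Set.Ioc (0 : ℝ) t ⊆ Set.Ioc 0 T := Set.Ioc_subset_Ioc_right ht.2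
    have : (∫ s, k (t, s) ∂μ) = ∫ s in Set.Ioc (0 : ℝ) t, w t * g s ∂μ := by
      simp only [hk]
      exact integral_indicator measurableSet_Ioc
    rw [this, hμ, Measure.restrict_restrict measurableSet_Ioc,
      Set.inter_eq_self_of_subset_left hsub, integral_const_mul]
    congr 1
    rw [hGdef]
    exact (intervalIntegral.integral_of_le ht.1.le).symm
  -- inner integral in t: for s ∈ (0, T], ∫ t, k (t, s) ∂μ = g s * ∫ t in s..T, w t
  set J : ℝ → ℝ := fun s => ∫ t in s..T, w t with hJdef
  have hinner2 : ∀ s ∈ Set.Ioc (0 : ℝ) T, (∫ t, k (t, s) ∂μ)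
      = g s * J s := by
    intro s hs
    have h1 : (fun t => k (t, s)) = Set.indicator (Set.Ici s) (fun t => w t * g s) := by
      funext t
      by_cases hts : s ≤ t
      · have hmem : s ∈ Set.Ioc (0 : ℝ) t := ⟨hs.1, hts⟩
        simp [hk, Set.indicator_of_mem hmem, Set.indicator_of_mem (Set.mem_Ici.2 hts)]
      · have hmem : s ∉ Set.Ioc (0 : ℝ) t := fun h => hts h.2
        simp [hk, Set.indicator_of_notMem hmem,
          Set.indicator_of_notMem (fun h => hts (Set.mem_Ici.1 h))]
    have h2 : Set.Ici s ∩ Set.Ioc 0 T = Set.Icc s T := by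
      ext x
      simp only [Set.mem_inter_iff, Set.mem_Ici, Set.mem_Ioc, Set.mem_Icc]
      constructor
      · rintro ⟨h1', h2', h3'⟩; exact ⟨h1', h3'⟩
      · rintro ⟨h1', h2'⟩; exact ⟨h1', lt_of_lt_of_le hs.1 h1', h2'⟩
    rw [h1, integral_indicator measurableSet_Ici, hμ,
      Measure.restrict_restrict measurableSet_Ici, h2, integral_mul_const,
      MeasureTheory.integral_Icc_eq_integral_Ioc,
      ← intervalIntegral.integral_of_le hs.2, mul_comm]
  -- the explicit exponential integral bound
  have hexp : ∀ s ∈ Set.Ioc (0 : ℝ) T, C * J s ≤ w s / 2 := by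
    intro s hs
    simp only [hJdef]
    have hderiv : ∀ t ∈ Set.uIcc s T, HasDerivAt
        (fun t => -(Real.exp (-2 * C * t)) / (2 * C)) (w t) t := by
      intro t _
      have h1 : HasDerivAt (fun t : ℝ => -2 * C * t) (-2 * C) t := by
        simpa using (hasDerivAt_id t).const_mul (-2 * C)
      have h2 : HasDerivAt (fun t : ℝ => Real.exp (-2 * C * t))
          (Real.exp (-2 * C * t) * (-2 * C)) t := (Real.hasDerivAt_exp _).comp t h1
      have h3 := (h2.neg).div_const (2 * C)
      refine h3.congr_deriv ?_
      simp only [hw]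
      field_simp
    have hint : ∫ t in s..T, w t
        = (-(Real.exp (-2 * C * T)) / (2 * C)) - (-(Real.exp (-2 * C * s)) / (2 * C)) := by
      apply intervalIntegral.integral_eq_sub_of_hasDerivAt (fun t ht => hderiv t ht)
      exact (hwc.intervalIntegrable s T)
    have hwT : 0 < Real.exp (-2 * C * T) := Real.exp_pos _
    have hCne : (2 * C) ≠ 0 := by positivity
    have heq : C * ((-(Real.exp (-2 * C * T)) / (2 * C))
        - (-(Real.exp (-2 * C * s)) / (2 * C)))
        = (Real.exp (-2 * C * s) - Real.exp (-2 * C * T)) / 2 := by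
      field_simp
      ring
    rw [hint, heq]
    simp only [hw]
    linarith
  -- Fubini: the double integral bound
  have hFubini : C * ∫ t, w t * G t ∂μ ≤ (1 / 2) * ∫ t, w t * g t ∂μ := by
    have hs1 : (∫ t, w t * G t ∂μ) = ∫ t, (∫ s, k (t, s) ∂μ) ∂μ := by
      rw [hμ]
      exact (setIntegral_congr_fun measurableSet_Ioc fun t ht => (hinner t ht).symm)
    have hswap : (∫ t, (∫ s, k (t, s) ∂μ) ∂μ) = ∫ s, (∫ t, k (t, s) ∂μ) ∂μ := by
      apply integral_integral_swap
      exact hkint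
    have hs2 : (∫ s, (∫ t, k (t, s) ∂μ) ∂μ)
        = ∫ s, g s * J s ∂μ := by
      rw [hμ]
      exact setIntegral_congr_fun measurableSet_Ioc fun s hs => hinner2 s hs
    rw [hs1, hswap, hs2, ← integral_const_mul]
    have hle : ∀ s ∈ Set.Ioc (0 : ℝ) T,
        C * (g s * J s) ≤ (1 / 2) * (w s * g s) := by
      intro s hs
      have h1 := hexp s hs
      have h2 := hg0 s
      calc C * (g s * J s) = g s * (C * J s) := by ring
        _ ≤ g s * (w s / 2) := by exact mul_le_mul_of_nonneg_left h1 h2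
        _ = (1 / 2) * (w s * g s) := by ring
    have hintL : Integrable (fun s => C * (g s * J s)) μ := by
      have hcont : ContinuousOn J (Set.Icc 0 T) := by
        rw [hJdef]
        have h1 : IntegrableOn w (Set.uIcc 0 T) := by
          rw [Set.uIcc_of_le hTle]; exact hwc.integrableOn_Icc
        exact (intervalIntegral.continuousOn_primitive_interval_left h1).mono
          (by rw [Set.uIcc_of_le hTle])
      have := (IntegrableOn.mul_continuousOn hgint hcont isCompact_Icc).mono_set
        Set.Ioc_subset_Icc_self
      exact this.const_mul C
    calc ∫ s, C * (g s * J s) ∂μ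
        ≤ ∫ s, (1 / 2) * (w s * g s) ∂μ := by
          rw [hμ]
          exact setIntegral_mono_on (by rw [hμ] at hintL; exact hintL)
            (by rw [hμ] at hwgμ; exact hwgμ.const_mul (1 / 2)) measurableSet_Ioc hle
      _ = (1 / 2) * ∫ s, w s * g s ∂μ := integral_const_mul _ _
  -- main pointwise bound and assembly
  rw [intervalIntegral.integral_of_le hTle, intervalIntegral.integral_of_le hTle]
  have hmain : (∫ t in Set.Ioc (0 : ℝ) T, w t * f t)
      ≤ ∫ t in Set.Ioc (0 : ℝ) T, (a * (w t * g t) + C * (w t * G t)) := by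
    apply setIntegral_mono_on
    · exact hwf.mono_set Set.Ioc_subset_Icc_self
    · exact ((hwgμ.const_mul a).add (hwGμ.const_mul C) : Integrable _ μ)
    · exact measurableSet_Ioc
    · intro t ht
      have h1 := hfg t (Set.Ioc_subset_Icc_self ht)
      have h2 : w t * f t ≤ w t * (a * g t + C * G t) :=
        mul_le_mul_of_nonneg_left h1 (hwpos t).le
      calc w t * f t ≤ w t * (a * g t + C * G t) := h2
        _ = a * (w t * g t) + C * (w t * G t) := by ring
  calc (∫ t in Set.Ioc (0 : ℝ) T, w t * f t)
      ≤ ∫ t in Set.Ioc (0 : ℝ) T, (a * (w t * g t) + C * (w t * G t)) := hmain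
    _ = a * (∫ t, w t * g t ∂μ) + C * (∫ t, w t * G t ∂μ) := by
        rw [hμ] at hwgμ hwGμ ⊢
        rw [integral_add (hwgμ.const_mul a) (hwGμ.const_mul C),
          integral_const_mul, integral_const_mul]
    _ ≤ a * (∫ t, w t * g t ∂μ) + (1 / 2) * (∫ t, w t * g t ∂μ) := by
        linarith [hFubini]
    _ = (a + 1 / 2) * ∫ t in Set.Ioc (0 : ℝ) T, w t * g t := by rw [hμ]; ring
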